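/- Let B be a bicategory, X and Y objects, and (f, g, φ, γ) a 2-condensation of X onto Y: f : X ⟶ Y, g : Y ⟶ X, φ : g ≫ f ⟶ 𝟙 Y, γ : 𝟙 Y ⟶ g ≫ f with γ ≫ φ = 𝟙 (𝟙 Y). Suppose g admits a left adjoint k : X ⟶ Y, with adjunction data unit η : 𝟙 X ⟶ k ≫ g and counit ε : g ≫ k ⟶ 𝟙 Y. Define γ' : 𝟙 Y ⟶ g ≫ k as the composite: γ, then ((ρ_ g).inv ▷ f), then ((g ◁ η) ▷ f), then the associator 2-isomorphisms rearranging (g ≫ (k ≫ g)) ≫ f into (g ≫ k) ≫ (g ≫ f), then (g ≫ k) ◁ φ, then (ρ_ (g ≫ k)).hom. Then γ' ≫ ε = 𝟙 (𝟙 Y); consequently (k, g, ε, γ') is a 2-condensation of X onto Y whose 2-morphism g ≫ k ⟶ 𝟙 Y is the counit of the adjunction k ⊣ g. -/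

import Mathlib

open CategoryTheory Bicategory

/-- A 2-condensation whose second leg `g` admits a left adjoint `k` can be promoted to a
unital condensation with legs `k` and `g`: the 2-morphism `γ' : 𝟙 Y ⟶ g ≫ k` built from
`γ`, the unit `η`, and `φ` is a section of the counit `ε`. -/
theorem unital_condensation_of_left_adjoint {B : Type*} [Bicategory B] {X Y : B}
    (f : X ⟶ Y) (g : Y ⟶ X) (φ : g ≫ f ⟶ 𝟙 Y) (γ : 𝟙 Y ⟶ g ≫ f)
    (hγφ : γ ≫ φ = 𝟙 (𝟙 Y))
    (k : X ⟶ Y) (η : 𝟙 X ⟶ k ≫ g) (ε' : g ≫ k ⟶ 𝟙 Y)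
    (left_triangle :
      (λ_ k).inv ≫ η ▷ k ≫ (α_ k g k).hom ≫ k ◁ ε' ≫ (ρ_ k).hom = 𝟙 k)
    (right_triangle :
      (ρ_ g).inv ≫ g ◁ η ≫ (α_ g k g).inv ≫ ε' ▷ g ≫ (λ_ g).hom = 𝟙 g) :
    (γ ≫ (ρ_ g).inv ▷ f ≫ (g ◁ η) ▷ f ≫ (α_ g k g).inv ▷ f ≫
      (α_ (g ≫ k) g f).hom ≫ (g ≫ k) ◁ φ ≫ (ρ_ (g ≫ k)).hom) ≫ ε' = 𝟙 (𝟙 Y) := by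
  have key : (ρ_ g).inv ≫ g ◁ η ≫ (α_ g k g).inv ≫ ε' ▷ g = (λ_ g).inv := by
    rw [← cancel_mono (λ_ g).hom]
    simpa using right_triangle
  have lam : (λ_ g).inv ▷ f ≫ (α_ (𝟙 Y) g f).hom = (λ_ (g ≫ f)).inv := by simp
  simp only [Category.assoc]
  rw [← rightUnitor_naturality, whisker_exchange_assoc,
    ← associator_naturality_left_assoc,
    ← comp_whiskerRight_assoc, ← comp_whiskerRight_assoc, ← comp_whiskerRight_assoc]
  simp only [Category.assoc]
  rw [key, reassoc_of% lam, ← leftUnitor_inv_naturality_assoc,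
    unitors_inv_equal, Iso.inv_hom_id, Category.comp_id, hγφ]
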